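/- arXiv:1908.11488 — 3 statements merged into one kernel-verified Lean document; each statement's English description precedes it below -/
import Mathlib

section
/- There exists n₀ ∈ ℕ such that the following holds for every finite simple graph G with n ≥ n₀ vertices and m edges and every real p ∈ (0, 1]: if p² m ≥ 400 (log₂ n)² and every vertex of G has degree at most m p / (20 log₂ n), and a random subset S of the vertices is generated by including each vertex independently with probability p, then with probability at least 1 − 1/n the number of edges of G with both endpoints in S is at most 6 p² m. -/
open MeasureTheory Finset

set_option maxHeartbeats 1000000

section Aux
variable {V : Type} [Fintype V] [DecidableEq V]

lemma measSet (s : Set (V → Bool)) : MeasurableSet s :=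
  (Set.to_countable s).measurableSet

lemma measFun (f : (V → Bool) → ENNReal) : Measurable f :=
  fun _ _ => measSet _

lemma cyl (p : ℝ) (hp1 : p ≤ 1) (T : Finset V) :
    Measure.pi (fun _ : V => (PMF.bernoulli (Real.toNNReal p)
        (Real.toNNReal_le_one.mpr hp1)).toMeasure)
      {ω : V → Bool | ∀ v ∈ T, ω v = true} = (ENNReal.ofReal p) ^ T.card := by
  have hset : {ω : V → Bool | ∀ v ∈ T, ω v = true} =
      Set.pi Set.univ (fun v => if v ∈ T then ({true} : Set Bool) else Set.univ) := by
    ext ω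
    simp only [Set.mem_setOf_eq, Set.mem_pi, Set.mem_univ, forall_true_left]
    constructor
    · intro h v
      by_cases hv : v ∈ T
      · simp [hv, h v hv]
      · simp [hv]
    · intro h v hv
      have := h v
      rw [if_pos hv] at this
      simpa using this
  rw [hset, Measure.pi_pi]
  have hval : ∀ v : V, (PMF.bernoulli (Real.toNNReal p)
      (Real.toNNReal_le_one.mpr hp1)).toMeasure
        (if v ∈ T then ({true} : Set Bool) else Set.univ)
      = if v ∈ T then ENNReal.ofReal p else 1 := by
    intro v
    by_cases hv : v ∈ T
    · simp only [hv, if_true]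
      rw [PMF.toMeasure_apply_singleton _ true (measurableSet_singleton true)]
      rfl
    · simp only [hv, if_false]
      exact measure_univ
  simp_rw [hval]
  rw [Finset.prod_ite_mem, Finset.univ_inter, Finset.prod_const]

lemma countTuples {α : Type} [Fintype α]
    (q T : ENNReal) (F : α → Finset V) (k : ℕ)
    (hF : ∀ x, (F x).card ≤ 2)
    (hstep : ∀ W : Finset V, W.card ≤ 2 * k → ∑ x : α, q ^ ((F x) \ W).card ≤ T) :
    ∀ j, j ≤ k → ∑ t : Fin j → α,
      q ^ (Finset.biUnion Finset.univ fun i => F (t i)).card ≤ T ^ j := by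
  intro j
  induction j with
  | zero =>
      intro _
      simp
  | succ j ih =>
      intro hjk
      have hj : j ≤ k := Nat.le_of_succ_le hjk
      have hcard : ∀ t : Fin j → α,
          (Finset.biUnion Finset.univ fun i => F (t i)).card ≤ 2 * k := by
        intro t
        calc (Finset.biUnion Finset.univ fun i => F (t i)).card
            ≤ ∑ i : Fin j, (F (t i)).card := Finset.card_biUnion_le
          _ ≤ ∑ _i : Fin j, 2 := Finset.sum_le_sum fun i _ => hF _
          _ = 2 * j := by simp [mul_comm]
          _ ≤ 2 * k := by omega
      calc ∑ t : Fin (j+1) → α, q ^ (Finset.biUnion Finset.univ fun i => F (t i)).card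
          = ∑ y : α × (Fin j → α),
              q ^ (Finset.biUnion Finset.univ fun i =>
                F (Fin.cons (α := fun _ => α) y.1 y.2 i)).card := by
            exact (Fintype.sum_equiv (Fin.consEquiv fun _ => α) _ _ (fun y => rfl)).symm
        _ = ∑ x : α, ∑ t : Fin j → α,
              q ^ (F x ∪ Finset.biUnion Finset.univ fun i => F (t i)).card := by
            rw [Fintype.sum_prod_type]
            refine Finset.sum_congr rfl fun x _ => Finset.sum_congr rfl fun t _ => ?_
            congr 2
            ext v
            simp only [Finset.mem_biUnion, Finset.mem_univ, true_and, Finset.mem_union]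
            constructor
            · rintro ⟨i, hi⟩
              rcases Fin.eq_zero_or_eq_succ i with rfl | ⟨i', rfl⟩
              · left; simpa using hi
              · right; exact ⟨i', by simpa using hi⟩
            · rintro (h | ⟨i, hi⟩)
              · exact ⟨0, by simpa using h⟩
              · exact ⟨i.succ, by simpa using hi⟩
        _ = ∑ t : Fin j → α, ∑ x : α,
              q ^ (F x ∪ Finset.biUnion Finset.univ fun i => F (t i)).card :=
            Finset.sum_comm
        _ ≤ ∑ t : Fin j → α,
              q ^ (Finset.biUnion Finset.univ fun i => F (t i)).card * T := by
            refine Finset.sum_le_sum fun t _ => ?_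
            have h1 : ∑ x : α,
                q ^ (F x ∪ Finset.biUnion Finset.univ fun i => F (t i)).card
                = q ^ (Finset.biUnion Finset.univ fun i => F (t i)).card *
                  ∑ x : α, q ^ ((F x) \ (Finset.biUnion Finset.univ fun i => F (t i))).card := by
              rw [Finset.mul_sum]
              refine Finset.sum_congr rfl fun x _ => ?_
              rw [← pow_add]
              congr 1
              rw [← Finset.card_sdiff_add_card (F x) _, add_comm]
            rw [h1]
            exact mul_le_mul_right (hstep _ (hcard t)) _
        _ = (∑ t : Fin j → α,
              q ^ (Finset.biUnion Finset.univ fun i => F (t i)).card) * T := by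
            rw [Finset.sum_mul]
        _ ≤ T ^ j * T := mul_le_mul_left (ih hj) T
        _ = T ^ (j+1) := (pow_succ T j).symm

end Aux

/-- There exists `n₀` such that for every finite simple graph `G` with `n ≥ n₀` vertices and
`m` edges and every `p ∈ (0, 1]`: if `p² m ≥ 400 (log₂ n)²` and every vertex has degree at
most `m p / (20 log₂ n)`, and a random subset `S` of the vertices is generated by including
each vertex independently with probability `p` (product Bernoulli measure on `V → Bool`),
then with probability at least `1 − 1/n` the number of edges with both endpoints in `S` is
at most `6 p² m`. -/
theorem stmt7 :
    ∃ n₀ : ℕ, ∀ (V : Type) [Fintype V] [DecidableEq V] (G : SimpleGraph V)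
      [DecidableRel G.Adj] (p : ℝ) (hp0 : 0 < p) (hp1 : p ≤ 1),
      n₀ ≤ Fintype.card V →
      400 * (Real.logb 2 (Fintype.card V)) ^ 2 ≤ p ^ 2 * (G.edgeFinset.card : ℝ) →
      (∀ u : V, (G.degree u : ℝ) ≤
          (G.edgeFinset.card : ℝ) * p / (20 * Real.logb 2 (Fintype.card V))) →
      ENNReal.ofReal (1 - 1 / (Fintype.card V : ℝ)) ≤
        Measure.pi
          (fun _ : V => (PMF.bernoulli (Real.toNNReal p)
            (Real.toNNReal_le_one.mpr hp1)).toMeasure)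
          {ω : V → Bool |
            (({e | e ∈ G.edgeSet ∧ ∀ v ∈ e, ω v = true} : Set (Sym2 V)).ncard : ℝ)
              ≤ 6 * p ^ 2 * (G.edgeFinset.card : ℝ)} := by
  classical
  refine ⟨2, ?_⟩
  intro V _ _ G _ p hp0 hp1 hn hpm hdeg
  set n := Fintype.card V with hn_def
  set L := Real.logb 2 (n : ℝ) with hL_def
  set q := ENNReal.ofReal p with hq_def
  set E := G.edgeFinset with hE_def
  set m := E.card with hm_def
  set μ := Measure.pi
      (fun _ : V => (PMF.bernoulli (Real.toNNReal p)
        (Real.toNNReal_le_one.mpr hp1)).toMeasure) with hμ_def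
  -- basic numerics
  have h2n : 2 ≤ n := hn
  have hn0R : (0:ℝ) < n := by
    have : (2:ℝ) ≤ n := by exact_mod_cast h2n
    linarith
  have hn2R : (2:ℝ) ≤ n := by exact_mod_cast h2n
  have hL1 : 1 ≤ L := by
    rw [hL_def]
    calc (1:ℝ) = Real.logb 2 2 := (Real.logb_self_eq_one (by norm_num)).symm
      _ ≤ Real.logb 2 (n : ℝ) := Real.logb_le_logb_of_le (by norm_num) (by norm_num) hn2R
  have hL0 : 0 < L := lt_of_lt_of_le one_pos hL1
  have hpm0 : (0:ℝ) < p^2 * m := lt_of_lt_of_le (by positivity) hpm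
  have hm0 : (0:ℝ) < m := by nlinarith [sq_nonneg p, hpm0]
  set k := ⌈L⌉₊ with hk_def
  have hk1 : 1 ≤ k := Nat.one_le_ceil_iff.mpr hL0
  have hkL : L ≤ (k:ℝ) := Nat.le_ceil L
  have hk2L : (k:ℝ) ≤ 2*L := by
    have := Nat.ceil_lt_add_one (le_of_lt hL0)
    linarith
  have hq1 : q ≤ 1 := ENNReal.ofReal_le_one.mpr hp1
  -- vertex set of an edge
  set F : Sym2 V → Finset V := fun e => Finset.univ.filter (fun v => v ∈ e) with hF_def
  have hFmem : ∀ (e : Sym2 V) (v : V), v ∈ F e ↔ v ∈ e := by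
    intro e v; simp [hF_def]
  have hF2 : ∀ e ∈ E, (F e).card = 2 := by
    intro e he
    rw [hE_def, SimpleGraph.mem_edgeFinset] at he
    revert he
    refine Sym2.inductionOn e ?_
    intro a b hab
    have hadj : G.Adj a b := hab
    have hne : a ≠ b := hadj.ne
    have hset : F s(a, b) = {a, b} := by
      ext v; simp [hF_def, Sym2.mem_iff]
    rw [hset, Finset.card_pair hne]
  -- the edge-counting function
  set N : (V → Bool) → ℕ :=
    fun ω => (E.filter (fun e => ∀ v ∈ F e, ω v = true)).card with hN_def
  have hNset : ∀ ω : V → Bool,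
      {e : Sym2 V | e ∈ G.edgeSet ∧ ∀ v ∈ e, ω v = true}
        = ↑(E.filter (fun e => ∀ v ∈ F e, ω v = true)) := by
    intro ω
    ext e
    simp [hE_def, SimpleGraph.mem_edgeFinset, hFmem]
  have hNcard : ∀ ω : V → Bool,
      ({e : Sym2 V | e ∈ G.edgeSet ∧ ∀ v ∈ e, ω v = true}).ncard = N ω := by
    intro ω
    rw [hNset ω, Set.ncard_coe_finset]
  set A : Set (V → Bool) := {ω | ((N ω : ℝ)) ≤ 6 * p^2 * m} with hA_def
  have hAeq : {ω : V → Bool |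
      (({e | e ∈ G.edgeSet ∧ ∀ v ∈ e, ω v = true} : Set (Sym2 V)).ncard : ℝ)
        ≤ 6 * p ^ 2 * (m : ℝ)} = A := by
    ext ω
    rw [hA_def]
    simp only [Set.mem_setOf_eq, hNcard ω]
  -- step bound
  have hstep : ∀ W : Finset V, W.card ≤ 2 * k →
      ∑ x : {e : Sym2 V // e ∈ E}, q ^ ((F x.1) \ W).card
        ≤ ENNReal.ofReal (2 * (p^2 * m)) := by
    intro W hW
    have hWR : (W.card : ℝ) ≤ 2 * (k:ℝ) := by exact_mod_cast hW
    rw [Finset.sum_coe_sort E (fun e => q ^ ((F e) \ W).card)]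
    have hsplit1 : ∑ e ∈ E, q ^ ((F e) \ W).card
        = (∑ e ∈ E.filter (fun e => F e ⊆ W), q ^ ((F e) \ W).card)
          + ∑ e ∈ E.filter (fun e => ¬ F e ⊆ W), q ^ ((F e) \ W).card :=
      (Finset.sum_filter_add_sum_filter_not E _ _).symm
    set E0 := E.filter (fun e => F e ⊆ W) with hE0_def
    set E' := E.filter (fun e => ¬ F e ⊆ W) with hE'_def
    set E1 := E'.filter (fun e => (F e ∩ W).Nonempty) with hE1_def
    set E2 := E'.filter (fun e => ¬ (F e ∩ W).Nonempty) with hE2_def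
    have hsplit2 : ∑ e ∈ E', q ^ ((F e) \ W).card
        = (∑ e ∈ E1, q ^ ((F e) \ W).card) + ∑ e ∈ E2, q ^ ((F e) \ W).card :=
      (Finset.sum_filter_add_sum_filter_not E' _ _).symm
    -- bounds on the three sums
    have h0 : ∑ e ∈ E0, q ^ ((F e) \ W).card ≤ (E0.card : ENNReal) := by
      calc ∑ e ∈ E0, q ^ ((F e) \ W).card ≤ ∑ _e ∈ E0, 1 :=
            Finset.sum_le_sum fun e _ => pow_le_one' hq1 _
        _ = (E0.card : ENNReal) := by simp
    have h1 : ∑ e ∈ E1, q ^ ((F e) \ W).card ≤ (E1.card : ENNReal) * q := by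
      calc ∑ e ∈ E1, q ^ ((F e) \ W).card ≤ ∑ _e ∈ E1, q := by
            refine Finset.sum_le_sum fun e he => ?_
            rw [hE1_def, Finset.mem_filter] at he
            have hns : ¬ F e ⊆ W := (Finset.mem_filter.mp he.1).2
            have hpos : 0 < ((F e) \ W).card :=
              Finset.card_pos.mpr (Finset.sdiff_nonempty.mpr hns)
            obtain ⟨c, hc⟩ : ∃ c, ((F e) \ W).card = c + 1 :=
              ⟨((F e) \ W).card - 1, (Nat.succ_pred_eq_of_pos hpos).symm⟩
            rw [hc, pow_succ]
            calc q ^ c * q ≤ 1 * q := mul_le_mul_left (pow_le_one' hq1 c) q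
              _ = q := one_mul q
        _ = (E1.card : ENNReal) * q := by
            rw [Finset.sum_const, nsmul_eq_mul]
    have h2 : ∑ e ∈ E2, q ^ ((F e) \ W).card ≤ (E2.card : ENNReal) * q ^ 2 := by
      calc ∑ e ∈ E2, q ^ ((F e) \ W).card ≤ ∑ _e ∈ E2, q ^ 2 := by
            refine Finset.sum_le_sum fun e he => ?_
            rw [hE2_def, Finset.mem_filter] at he
            have heE : e ∈ E := (Finset.mem_filter.mp he.1).1
            have hdisj : F e ∩ W = ∅ := Finset.not_nonempty_iff_eq_empty.mp he.2
            have hsd : (F e) \ W = F e := by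
              rw [Finset.sdiff_eq_self_iff_disjoint]
              exact Finset.disjoint_iff_inter_eq_empty.mpr hdisj
            rw [hsd, hF2 e heE]
        _ = (E2.card : ENNReal) * q ^ 2 := by
            rw [Finset.sum_const, nsmul_eq_mul]
    -- cardinality bounds
    have hE0card : E0.card ≤ W.card * W.card := by
      have hinj : Set.InjOn (fun e : Sym2 V => e.out) E0 :=
        fun e₁ _ e₂ _ h => by
          have h1 : Sym2.mk e₁.out = Sym2.mk e₂.out := congrArg Sym2.mk (by exact h)
          have h2 : Quot.mk (Sym2.Rel V) e₁.out = Quot.mk (Sym2.Rel V) e₂.out :=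
            congrArg _ (by exact h)
          rwa [Quot.out_eq, Quot.out_eq] at h2
      have hmap : ∀ e ∈ E0, e.out ∈ W ×ˢ W := by
        intro e he
        rw [hE0_def, Finset.mem_filter] at he
        have h1 : e.out.1 ∈ W := he.2 ((hFmem e e.out.1).mpr (Sym2.out_fst_mem e))
        have h2 : e.out.2 ∈ W := he.2 ((hFmem e e.out.2).mpr (Sym2.out_snd_mem e))
        exact Finset.mem_product.mpr ⟨h1, h2⟩
      calc E0.card ≤ (W ×ˢ W).card := Finset.card_le_card_of_injOn _ hmap hinj
        _ = W.card * W.card := Finset.card_product W W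
    have hE1card : E1.card ≤ ∑ w ∈ W, G.degree w := by
      have hsub : E1 ⊆ W.biUnion (fun w => G.incidenceFinset w) := by
        intro e he
        rw [hE1_def, Finset.mem_filter] at he
        obtain ⟨w, hw⟩ := he.2
        rw [Finset.mem_inter] at hw
        refine Finset.mem_biUnion.mpr ⟨w, hw.2, ?_⟩
        rw [SimpleGraph.mem_incidenceFinset]
        have heE : e ∈ G.edgeSet := by
          have := (Finset.mem_filter.mp he.1).1
          rwa [hE_def, SimpleGraph.mem_edgeFinset] at this
        exact ⟨heE, (hFmem e w).mp hw.1⟩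
      calc E1.card ≤ (W.biUnion (fun w => G.incidenceFinset w)).card :=
            Finset.card_le_card hsub
        _ ≤ ∑ w ∈ W, (G.incidenceFinset w).card := Finset.card_biUnion_le
        _ = ∑ w ∈ W, G.degree w := by
            refine Finset.sum_congr rfl fun w _ => ?_
            exact SimpleGraph.card_incidenceFinset_eq_degree G w
    have hE2card : E2.card ≤ m := by
      calc E2.card ≤ E'.card := Finset.card_le_card (Finset.filter_subset _ _)
        _ ≤ E.card := Finset.card_le_card (Finset.filter_subset _ _)
    -- real bounds
    have hE0R : (E0.card : ℝ) ≤ p^2 * m / 25 := by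
      have h1 : (E0.card : ℝ) ≤ (W.card : ℝ) * (W.card : ℝ) := by exact_mod_cast hE0card
      have h2 : (W.card : ℝ) ≥ 0 := Nat.cast_nonneg _
      have h3 : (W.card : ℝ) ≤ 4 * L := le_trans hWR (by linarith)
      have h4 : (W.card : ℝ) * (W.card : ℝ) ≤ 16 * L^2 := by nlinarith
      have h5 : 16 * L^2 ≤ p^2 * m / 25 := by linarith
      linarith
    have hE1R : (E1.card : ℝ) * p ≤ p^2 * m / 5 := by
      have hdsum : (∑ w ∈ W, (G.degree w : ℝ)) ≤ (W.card : ℝ) * ((m:ℝ) * p / (20 * L)) := by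
        calc ∑ w ∈ W, (G.degree w : ℝ) ≤ ∑ _w ∈ W, ((m:ℝ) * p / (20 * L)) :=
              Finset.sum_le_sum fun w _ => hdeg w
          _ = (W.card : ℝ) * ((m:ℝ) * p / (20 * L)) := by
              rw [Finset.sum_const, nsmul_eq_mul]
      have hE1R0 : (E1.card : ℝ) ≤ (W.card : ℝ) * ((m:ℝ) * p / (20 * L)) := by
        refine le_trans ?_ hdsum
        exact_mod_cast hE1card
      have hfrac0 : 0 ≤ (m:ℝ) * p / (20 * L) :=
        div_nonneg (mul_nonneg hm0.le hp0.le) (by positivity)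
      have h4L : (E1.card : ℝ) ≤ 4 * L * ((m:ℝ) * p / (20 * L)) := by
        refine le_trans hE1R0 ?_
        have hWc : (W.card : ℝ) ≤ 4 * L := le_trans hWR (by linarith)
        exact mul_le_mul_of_nonneg_right hWc hfrac0
      have heq : 4 * L * ((m:ℝ) * p / (20 * L)) = (m:ℝ) * p / 5 := by
        field_simp
        ring
      rw [heq] at h4L
      have := mul_le_mul_of_nonneg_right h4L hp0.le
      calc (E1.card : ℝ) * p ≤ ((m:ℝ) * p / 5) * p := this
        _ = p^2 * m / 5 := by ring
    have hE2R : (E2.card : ℝ) * (p * p) ≤ p^2 * m := by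
      have h1 : (E2.card : ℝ) ≤ m := by exact_mod_cast hE2card
      calc (E2.card : ℝ) * (p * p) ≤ (m:ℝ) * (p * p) :=
            mul_le_mul_of_nonneg_right h1 (mul_self_nonneg p)
        _ = p^2 * m := by ring
    -- assemble in ENNReal
    have hpart0 : (E0.card : ENNReal) ≤ ENNReal.ofReal (p^2 * m / 25) := by
      rw [← ENNReal.ofReal_natCast E0.card]
      exact ENNReal.ofReal_le_ofReal hE0R
    have hpart1 : (E1.card : ENNReal) * q ≤ ENNReal.ofReal (p^2 * m / 5) := by
      rw [← ENNReal.ofReal_natCast E1.card, hq_def,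
        ← ENNReal.ofReal_mul (Nat.cast_nonneg _)]
      exact ENNReal.ofReal_le_ofReal hE1R
    have hpart2 : (E2.card : ENNReal) * q ^ 2 ≤ ENNReal.ofReal (p^2 * m) := by
      rw [← ENNReal.ofReal_natCast E2.card, hq_def, sq,
        ← ENNReal.ofReal_mul hp0.le, ← ENNReal.ofReal_mul (Nat.cast_nonneg _)]
      exact ENNReal.ofReal_le_ofReal hE2R
    calc ∑ e ∈ E, q ^ ((F e) \ W).card
        = (∑ e ∈ E0, q ^ ((F e) \ W).card)
          + ((∑ e ∈ E1, q ^ ((F e) \ W).card) + ∑ e ∈ E2, q ^ ((F e) \ W).card) := by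
          rw [hsplit1, hsplit2]
      _ ≤ ENNReal.ofReal (p^2 * m / 25)
          + (ENNReal.ofReal (p^2 * m / 5) + ENNReal.ofReal (p^2 * m)) := by
          refine add_le_add (le_trans h0 hpart0)
            (add_le_add (le_trans h1 hpart1) (le_trans h2 hpart2))
      _ = ENNReal.ofReal (p^2 * m / 25 + (p^2 * m / 5 + p^2 * m)) := by
          rw [← ENNReal.ofReal_add (by positivity) (by positivity),
            ← ENNReal.ofReal_add (by positivity) (by positivity)]
      _ ≤ ENNReal.ofReal (2 * (p^2 * m)) := by
          refine ENNReal.ofReal_le_ofReal ?_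
          nlinarith [hpm0]
  -- moment bound
  set Tq := ENNReal.ofReal (2 * (p^2 * m)) with hTq_def
  have hNsum : ∀ ω : V → Bool, ((N ω : ENNReal))
      = ∑ x : {e : Sym2 V // e ∈ E},
          (if ∀ v ∈ F x.1, ω v = true then (1:ENNReal) else 0) := by
    intro ω
    rw [Finset.sum_coe_sort E
      (fun e => if ∀ v ∈ F e, ω v = true then (1:ENNReal) else 0)]
    have hcf : N ω = ∑ e ∈ E, if (∀ v ∈ F e, ω v = true) then 1 else 0 :=
      Finset.card_filter _ _
    rw [hcf]
    push_cast
    refine Finset.sum_congr rfl fun e _ => ?_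
    split <;> simp
  have hpow : ∀ ω : V → Bool, ((N ω : ENNReal)) ^ k
      = ∑ t : Fin k → {e : Sym2 V // e ∈ E},
          (if (∀ v ∈ (Finset.biUnion Finset.univ fun i => F ((t i) : Sym2 V)), ω v = true)
            then (1:ENNReal) else 0) := by
    intro ω
    rw [hNsum ω, ← Fin.prod_const k, Finset.prod_univ_sum]
    rw [Fintype.piFinset_univ]
    refine Finset.sum_congr rfl fun t _ => ?_
    by_cases hQ : ∀ v ∈ (Finset.biUnion Finset.univ fun i => F ((t i) : Sym2 V)), ω v = true
    · rw [if_pos hQ]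
      refine Finset.prod_eq_one fun i _ => ?_
      rw [if_pos]
      intro v hv
      exact hQ v (Finset.mem_biUnion.mpr ⟨i, Finset.mem_univ i, hv⟩)
    · rw [if_neg hQ]
      push_neg at hQ
      obtain ⟨v, hv, hvf⟩ := hQ
      rw [Finset.mem_biUnion] at hv
      obtain ⟨i, _, hvi⟩ := hv
      refine Finset.prod_eq_zero (Finset.mem_univ i) ?_
      rw [if_neg]
      intro hall
      exact hvf (hall v hvi)
  have hInt : ∫⁻ ω, ((N ω : ENNReal)) ^ k ∂μ ≤ Tq ^ k := by
    have hIeq : ∫⁻ ω, ((N ω : ENNReal)) ^ k ∂μ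
        = ∑ t : Fin k → {e : Sym2 V // e ∈ E},
            q ^ (Finset.biUnion Finset.univ fun i => F ((t i) : Sym2 V)).card := by
      rw [lintegral_congr hpow]
      rw [lintegral_finset_sum _ (fun t _ => measFun _)]
      refine Finset.sum_congr rfl fun t _ => ?_
      have hind : (fun ω : V → Bool =>
          if (∀ v ∈ (Finset.biUnion Finset.univ fun i => F ((t i) : Sym2 V)), ω v = true)
            then (1:ENNReal) else 0)
          = Set.indicator {ω : V → Bool |
              ∀ v ∈ (Finset.biUnion Finset.univ fun i => F ((t i) : Sym2 V)), ω v = true}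
              (1 : (V → Bool) → ENNReal) := by
        funext ω
        rw [Set.indicator_apply]
        simp only [Set.mem_setOf_eq, Pi.one_apply]
      rw [hind, lintegral_indicator_one (measSet _)]
      exact cyl p hp1 _
    rw [hIeq]
    exact countTuples q Tq (fun x : {e : Sym2 V // e ∈ E} => F x.1) k
      (fun x => le_of_eq (hF2 x.1 x.2)) hstep k le_rfl
  -- Markov
  have hr0 : (0:ℝ) < 6 * p^2 * m := by nlinarith [hpm0]
  have hAc : μ Aᶜ ≤ ENNReal.ofReal (1 / (n:ℝ)) := by
    have hsub : Aᶜ ⊆ {ω : V → Bool |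
        (ENNReal.ofReal (6 * p^2 * m)) ^ k ≤ ((N ω : ENNReal)) ^ k} := by
      intro ω hω
      rw [hA_def] at hω
      simp only [Set.mem_compl_iff, Set.mem_setOf_eq, not_le] at hω
      have h1 : ENNReal.ofReal (6 * p^2 * m) ≤ (N ω : ENNReal) := by
        rw [← ENNReal.ofReal_natCast (N ω)]
        exact ENNReal.ofReal_le_ofReal hω.le
      exact pow_le_pow_left' h1 k
    have hne0 : (ENNReal.ofReal (6 * p^2 * m)) ^ k ≠ 0 :=
      pow_ne_zero _ (ne_of_gt (ENNReal.ofReal_pos.mpr hr0))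
    have hnetop : (ENNReal.ofReal (6 * p^2 * m)) ^ k ≠ ⊤ :=
      ENNReal.pow_ne_top ENNReal.ofReal_ne_top
    have hthird : Tq ^ k / (ENNReal.ofReal (6 * p^2 * m)) ^ k
        ≤ (ENNReal.ofReal ((1:ℝ)/3)) ^ k := by
      refine ENNReal.div_le_of_le_mul ?_
      rw [← mul_pow]
      refine pow_le_pow_left' (le_of_eq ?_) k
      rw [hTq_def, ← ENNReal.ofReal_mul (by norm_num)]
      congr 1
      ring
    have hhalf : ((1:ℝ)/3) ^ k ≤ (1:ℝ)/(n:ℝ) := by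
      have h2k : (n:ℝ) ≤ 2 ^ k := by
        have h1 : (2:ℝ) ^ L = (n:ℝ) := Real.rpow_logb (by norm_num) (by norm_num) hn0R
        have h2 : (2:ℝ) ^ L ≤ (2:ℝ) ^ ((k:ℕ):ℝ) :=
          Real.rpow_le_rpow_of_exponent_le (by norm_num) hkL
        rw [Real.rpow_natCast] at h2
        linarith
      have h3 : ((1:ℝ)/3) ^ k ≤ ((1:ℝ)/2) ^ k :=
        pow_le_pow_left₀ (by norm_num) (by norm_num) k
      have h4 : ((1:ℝ)/2) ^ k = 1 / (2:ℝ)^k := by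
        rw [one_div_pow]
      have h5 : 1 / (2:ℝ)^k ≤ 1 / (n:ℝ) := one_div_le_one_div_of_le hn0R h2k
      linarith
    calc μ Aᶜ ≤ μ {ω : V → Bool |
          (ENNReal.ofReal (6 * p^2 * m)) ^ k ≤ ((N ω : ENNReal)) ^ k} :=
          measure_mono hsub
      _ ≤ (∫⁻ ω, ((N ω : ENNReal)) ^ k ∂μ) / (ENNReal.ofReal (6 * p^2 * m)) ^ k :=
          meas_ge_le_lintegral_div (measFun _).aemeasurable hne0 hnetop
      _ ≤ Tq ^ k / (ENNReal.ofReal (6 * p^2 * m)) ^ k :=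
          ENNReal.div_le_div_right hInt _
      _ ≤ (ENNReal.ofReal ((1:ℝ)/3)) ^ k := hthird
      _ = ENNReal.ofReal (((1:ℝ)/3) ^ k) := (ENNReal.ofReal_pow (by norm_num) k).symm
      _ ≤ ENNReal.ofReal (1 / (n:ℝ)) := ENNReal.ofReal_le_ofReal hhalf
  -- conclude
  have hA : MeasurableSet A := measSet _
  have hfin : μ Aᶜ ≠ ⊤ := measure_ne_top μ _
  have htot : μ A + μ Aᶜ = 1 := by
    rw [measure_add_measure_compl hA]
    exact measure_univ
  rw [hAeq]
  refine (ENNReal.add_le_add_iff_right hfin).mp ?_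
  have hfr1 : (0:ℝ) ≤ 1 - 1/(n:ℝ) := by
    have : 1/(n:ℝ) ≤ 1/2 := one_div_le_one_div_of_le (by norm_num) hn2R
    linarith
  calc ENNReal.ofReal (1 - 1/(n:ℝ)) + μ Aᶜ
      ≤ ENNReal.ofReal (1 - 1/(n:ℝ)) + ENNReal.ofReal (1/(n:ℝ)) :=
        add_le_add_right hAc _
    _ = ENNReal.ofReal 1 := by
        rw [← ENNReal.ofReal_add hfr1 (by positivity)]
        norm_num
    _ = 1 := ENNReal.ofReal_one
    _ = μ A + μ Aᶜ := htot.symm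
end

section
/- The total number of intra-component edges incident to at least one bad vertex satisfies |E^new_1 ∪ ⋯ ∪ E^new_s| ≤ 2 |E^inter|. -/
/-- Let `G = (V, E)` be a finite simple graph and `c : V → {1, …, s}` a component assignment.
`Einter` is the set of inter-component edges, `Ecomp i` the set of edges with both endpoints in
component `i`; a vertex `u` is bad if `deg_{Ecomp (c u)}(u) < deg_{Einter}(u)`, and `Enew i` is
the set of edges of `Ecomp i` incident to at least one bad vertex. Then the total number of
intra-component edges incident to at least one bad vertex satisfies
`|Enew 1 ∪ ⋯ ∪ Enew s| ≤ 2 |Einter|`. -/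
theorem stmt9 {V : Type*} [Fintype V] (G : SimpleGraph V) (s : ℕ) (c : V → Fin s)
    (Einter : Set (Sym2 V))
    (hEinter : Einter = {e | e ∈ G.edgeSet ∧ ∃ a b, e = s(a, b) ∧ c a ≠ c b})
    (Ecomp : Fin s → Set (Sym2 V))
    (hEcomp : ∀ i, Ecomp i = {e | e ∈ G.edgeSet ∧ ∀ v ∈ e, c v = i})
    (degE : Set (Sym2 V) → V → ℕ)
    (hdegE : ∀ E' u, degE E' u = {e ∈ E' | u ∈ e}.ncard)
    (bad : V → Prop)
    (hbad : ∀ u, bad u ↔ degE (Ecomp (c u)) u < degE Einter u)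
    (Enew : Fin s → Set (Sym2 V))
    (hEnew : ∀ i, Enew i = {e ∈ Ecomp i | ∃ v ∈ e, bad v}) :
    (⋃ i, Enew i).ncard ≤ 2 * Einter.ncard := by
  classical
  set F : Finset (Sym2 V) := (Set.toFinite Einter).toFinset with hF
  set B : Finset V := Finset.univ.filter bad with hB
  -- per-vertex incidence finsets
  have hS : ∀ (E' : Set (Sym2 V)) (u : V),
      {e ∈ E' | u ∈ e} = ↑(Finset.univ.filter (fun e : Sym2 V => e ∈ E' ∧ u ∈ e)) := by
    intro E' u
    ext e
    simp
  have hdeg' : ∀ (E' : Set (Sym2 V)) (u : V),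
      degE E' u = (Finset.univ.filter (fun e : Sym2 V => e ∈ E' ∧ u ∈ e)).card := by
    intro E' u
    rw [hdegE, hS, Set.ncard_coe_finset]
  -- step 1: the union is contained in a bi-union over bad vertices
  have hsub : (⋃ i, Enew i) ⊆
      ↑(B.biUnion fun u => Finset.univ.filter (fun e : Sym2 V => e ∈ Ecomp (c u) ∧ u ∈ e)) := by
    intro e he
    rw [Set.mem_iUnion] at he
    obtain ⟨i, hei⟩ := he
    rw [hEnew i] at hei
    obtain ⟨heC, v, hv, hbv⟩ := hei
    have hcv : c v = i := (hEcomp i ▸ heC).2 v hv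
    have hvB : v ∈ B := by simp [hB, hbv]
    simp only [Finset.coe_biUnion, Set.mem_iUnion, Finset.mem_coe, Finset.mem_filter,
      Finset.mem_univ, true_and]
    exact ⟨v, hvB, hcv ▸ heC, hv⟩
  have h1 : (⋃ i, Enew i).ncard ≤
      ∑ u ∈ B, (Finset.univ.filter (fun e : Sym2 V => e ∈ Ecomp (c u) ∧ u ∈ e)).card := by
    calc (⋃ i, Enew i).ncard
        ≤ (↑(B.biUnion fun u => Finset.univ.filter
            (fun e : Sym2 V => e ∈ Ecomp (c u) ∧ u ∈ e)) : Set (Sym2 V)).ncard :=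
          Set.ncard_le_ncard hsub (Set.toFinite _)
      _ = (B.biUnion fun u => Finset.univ.filter
            (fun e : Sym2 V => e ∈ Ecomp (c u) ∧ u ∈ e)).card := Set.ncard_coe_finset _
      _ ≤ _ := Finset.card_biUnion_le
  -- step 2: bound each per-vertex count by the inter-degree
  have h2 : ∀ u ∈ B, (Finset.univ.filter (fun e : Sym2 V => e ∈ Ecomp (c u) ∧ u ∈ e)).card
      ≤ degE Einter u := by
    intro u hu
    rw [← hdeg']
    exact le_of_lt ((hbad u).1 (by simpa [hB] using hu))
  -- step 3: double counting
  have hdegF : ∀ u, degE Einter u = (F.filter (fun e => u ∈ e)).card := by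
    intro u
    rw [hdeg']
    congr 1
    ext e
    simp [hF, Set.Finite.mem_toFinset]
  have h3 : ∑ u : V, degE Einter u = 2 * Einter.ncard := by
    have hcard : Einter.ncard = F.card := by
      rw [hF]
      exact Set.ncard_eq_toFinset_card _ (Set.toFinite Einter)
    calc ∑ u : V, degE Einter u
        = ∑ u : V, ∑ e ∈ F, (if u ∈ e then 1 else 0) := by
          simp only [hdegF, Finset.card_filter]
      _ = ∑ e ∈ F, ∑ u : V, (if u ∈ e then 1 else 0) := Finset.sum_comm
      _ = ∑ e ∈ F, 2 := by
          apply Finset.sum_congr rfl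
          intro e heF
          have heI : e ∈ Einter := by
            rw [hF, Set.Finite.mem_toFinset] at heF; exact heF
          rw [hEinter] at heI
          obtain ⟨-, a, b, rfl, hab⟩ := heI
          have hne : a ≠ b := fun h => hab (by rw [h])
          rw [← Finset.card_filter]
          have : Finset.univ.filter (fun u => u ∈ s(a, b)) = {a, b} := by
            ext u
            simp [Sym2.mem_iff]
          rw [this, Finset.card_pair hne]
      _ = 2 * Einter.ncard := by rw [Finset.sum_const, hcard]; ring
  calc (⋃ i, Enew i).ncard ≤ _ := h1
    _ ≤ ∑ u ∈ B, degE Einter u := Finset.sum_le_sum h2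
    _ ≤ ∑ u : V, degE Einter u := Finset.sum_le_sum_of_subset (Finset.subset_univ B)
    _ = 2 * Einter.ncard := h3
end

section
/- The edge set E^new = E^inter ∪ E^new_1 ∪ ⋯ ∪ E^new_s satisfies |E^new| ≤ 3 |E^inter|; in particular, if |E^inter| ≤ |E|/10 then |E^new| ≤ (3/10)|E|. -/
/-- Setup as in the expander decomposition: `G = (V, E)` a finite simple graph,
`c : V → {1, …, s}` a component assignment, `Einter` the inter-component edges, `Ecomp i` the
edges with both endpoints in component `i`, a vertex is bad if
`deg_{Ecomp (c u)}(u) < deg_{Einter}(u)`, `Enew i` the edges of `Ecomp i` incident to a bad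
vertex, and `EnewTot = Einter ∪ Enew 1 ∪ ⋯ ∪ Enew s`. Then `|EnewTot| ≤ 3 |Einter|`; in
particular, if `|Einter| ≤ |E|/10` then `|EnewTot| ≤ (3/10)|E|`. -/
theorem stmt10 {V : Type*} [Fintype V] (G : SimpleGraph V) (s : ℕ) (c : V → Fin s)
    (Einter : Set (Sym2 V))
    (hEinter : Einter = {e | e ∈ G.edgeSet ∧ ∃ a b, e = s(a, b) ∧ c a ≠ c b})
    (Ecomp : Fin s → Set (Sym2 V))
    (hEcomp : ∀ i, Ecomp i = {e | e ∈ G.edgeSet ∧ ∀ v ∈ e, c v = i})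
    (degE : Set (Sym2 V) → V → ℕ)
    (hdegE : ∀ E' u, degE E' u = {e ∈ E' | u ∈ e}.ncard)
    (bad : V → Prop)
    (hbad : ∀ u, bad u ↔ degE (Ecomp (c u)) u < degE Einter u)
    (Enew : Fin s → Set (Sym2 V))
    (hEnew : ∀ i, Enew i = {e ∈ Ecomp i | ∃ v ∈ e, bad v})
    (EnewTot : Set (Sym2 V))
    (hEnewTot : EnewTot = Einter ∪ ⋃ i, Enew i) :
    EnewTot.ncard ≤ 3 * Einter.ncard ∧
    ((Einter.ncard : ℝ) ≤ (G.edgeSet.ncard : ℝ) / 10 →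
      (EnewTot.ncard : ℝ) ≤ 3 / 10 * (G.edgeSet.ncard : ℝ)) := by
  classical
  have hfin : ∀ S : Set (Sym2 V), S.Finite := fun S => S.toFinite
  set N := ⋃ i, Enew i with hN
  set Nfin := (hfin N).toFinset with hNfin
  set Tfin := (hfin Einter).toFinset with hTfin
  set Bfin := Finset.univ.filter bad with hBfin
  -- counting filters
  have hfilt : ∀ u, (Tfin.filter (fun e => u ∈ e)).card = degE Einter u := by
    intro u
    rw [hdegE, ← Set.ncard_coe_finset]
    congr 1
    ext e
    simp only [Finset.coe_filter, Set.mem_setOf_eq, Finset.mem_coe, hTfin,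
      Set.Finite.mem_toFinset]
  -- handshake-type bound
  have h3 : ∑ u : V, degE Einter u ≤ 2 * Einter.ncard := by
    have : ∑ u : V, degE Einter u = ∑ e ∈ Tfin, (Finset.univ.filter (fun u => u ∈ e)).card := by
      simp_rw [← hfilt, Finset.card_filter]
      rw [Finset.sum_comm]
    rw [this]
    have hTcard : Einter.ncard = Tfin.card := Set.ncard_eq_toFinset_card Einter (hfin Einter)
    have hb : ∀ e ∈ Tfin, (Finset.univ.filter (fun u => u ∈ e)).card ≤ 2 := by
      intro e _
      induction e using Sym2.ind with
      | _ a b =>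
        have : Finset.univ.filter (fun u => u ∈ s(a, b)) ⊆ {a, b} := by
          intro x hx
          simp only [Finset.mem_filter, Sym2.mem_iff] at hx
          simp [hx.2]
        calc (Finset.univ.filter (fun u => u ∈ s(a, b))).card ≤ ({a, b} : Finset V).card :=
              Finset.card_le_card this
          _ ≤ 2 := Finset.card_insert_le a {b} |>.trans (by simp)
    calc ∑ e ∈ Tfin, (Finset.univ.filter (fun u => u ∈ e)).card ≤ ∑ _e ∈ Tfin, 2 :=
          Finset.sum_le_sum hb
      _ = 2 * Tfin.card := by rw [Finset.sum_const, smul_eq_mul, mul_comm]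
      _ = 2 * Einter.ncard := by rw [hTcard]
  -- each new edge has a bad endpoint
  have hsub : Nfin ⊆ Bfin.biUnion (fun u => Nfin.filter (fun e => u ∈ e)) := by
    intro e he
    have heN : e ∈ N := by simpa [hNfin] using he
    obtain ⟨i, hi⟩ := Set.mem_iUnion.mp heN
    rw [hEnew] at hi
    obtain ⟨v, hv, hbadv⟩ := hi.2
    refine Finset.mem_biUnion.mpr ⟨v, ?_, ?_⟩
    · simp [hBfin, hbadv]
    · simp only [Finset.mem_filter]
      exact ⟨he, hv⟩
  have h2 : ∀ u ∈ Bfin, (Nfin.filter (fun e => u ∈ e)).card ≤ degE Einter u := by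
    intro u hu
    have hbadu : bad u := by simpa [hBfin] using hu
    have hle1 : (Nfin.filter (fun e => u ∈ e)).card ≤ degE (Ecomp (c u)) u := by
      rw [hdegE, ← Set.ncard_coe_finset]
      apply Set.ncard_le_ncard _ (hfin _)
      intro e he
      simp only [Finset.coe_filter, Set.mem_setOf_eq, Finset.mem_coe] at he
      obtain ⟨heN, hue⟩ := he
      have heN' : e ∈ N := by simpa [hNfin] using heN
      obtain ⟨i, hi⟩ := Set.mem_iUnion.mp heN'
      rw [hEnew] at hi
      have hcomp := hi.1
      have hcui : c u = i := by
        rw [hEcomp] at hcomp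
        exact hcomp.2 u hue
      rw [hcui]
      exact ⟨hcomp, hue⟩
    exact hle1.trans (le_of_lt ((hbad u).mp hbadu))
  have hNcard : N.ncard ≤ 2 * Einter.ncard := by
    have : N.ncard = Nfin.card := Set.ncard_eq_toFinset_card N (hfin N)
    rw [this]
    calc Nfin.card ≤ (Bfin.biUnion (fun u => Nfin.filter (fun e => u ∈ e))).card :=
          Finset.card_le_card hsub
      _ ≤ ∑ u ∈ Bfin, (Nfin.filter (fun e => u ∈ e)).card := Finset.card_biUnion_le
      _ ≤ ∑ u ∈ Bfin, degE Einter u := Finset.sum_le_sum h2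
      _ ≤ ∑ u : V, degE Einter u := Finset.sum_le_sum_of_subset (Finset.subset_univ _)
      _ ≤ 2 * Einter.ncard := h3
  have key : EnewTot.ncard ≤ 3 * Einter.ncard := by
    rw [hEnewTot]
    calc (Einter ∪ N).ncard ≤ Einter.ncard + N.ncard := Set.ncard_union_le _ _
      _ ≤ Einter.ncard + 2 * Einter.ncard := by omega
      _ = 3 * Einter.ncard := by ring
  refine ⟨key, fun h => ?_⟩
  have : (EnewTot.ncard : ℝ) ≤ 3 * (Einter.ncard : ℝ) := by exact_mod_cast key
  linarith
end
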